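/- arXiv:1706.10003 — 2 statements merged into one kernel-verified Lean document; each statement's English description precedes it below -/
import Mathlib

section
/- Let p be a probability density on ℝ^d that is L-Lipschitz: |p(x) − p(y)| ≤ L·‖x − y‖ for all x, y. Then sup_x p(x) ≤ ((d+1)/v_d)^{1/(d+1)} · L^{d/(d+1)}, where v_d is the volume of the d-dimensional Euclidean unit ball. -/
open MeasureTheory Metric Set

lemma lipschitz_density_aux (d : ℕ) (hd : 0 < d)
    (p : EuclideanSpace ℝ (Fin d) → ℝ) (L : ℝ) (hL : 0 < L)
    (hnonneg : ∀ x, 0 ≤ p x)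
    (hint : ∫ x, p x = 1)
    (hlip : ∀ x y, |p x - p y| ≤ L * ‖x - y‖)
    (vd : ℝ) (hvd : vd = (volume (Metric.closedBall (0 : EuclideanSpace ℝ (Fin d)) 1)).toReal)
    (x : EuclideanSpace ℝ (Fin d)) (hpx : 0 < p x) :
    p x ≤ (((d : ℝ) + 1) / vd) ^ ((1 : ℝ) / ((d : ℝ) + 1)) * L ^ ((d : ℝ) / ((d : ℝ) + 1)) := by
  haveI : Nonempty (Fin d) := Fin.pos_iff_nonempty.mp hd
  haveI : Nontrivial (EuclideanSpace ℝ (Fin d)) := by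
    unfold EuclideanSpace; infer_instance
  set M := p x with hM
  set r := M / L with hrdef
  have hr : 0 < r := div_pos hpx hL
  have hvd0 : 0 < vd := by
    rw [hvd]
    exact ENNReal.toReal_pos (measure_closedBall_pos volume _ one_pos).ne'
      (measure_closedBall_lt_top).ne
  set f : ℝ → ℝ := fun s => max (M - L * s) 0 with hf
  have hf_cont : Continuous f := by fun_prop
  set g : EuclideanSpace ℝ (Fin d) → ℝ := fun y => f ‖y - x‖ with hg
  have hg_cont : Continuous g := by fun_prop
  have hg_supp : HasCompactSupport g := by
    apply HasCompactSupport.intro (isCompact_closedBall x r)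
    intro y hy
    have : r < ‖y - x‖ := by
      simpa [dist_eq_norm] using hy
    have : M - L * ‖y - x‖ < 0 := by
      rw [sub_neg]
      calc M = L * r := by rw [hrdef, mul_div_cancel₀ _ hL.ne']
      _ < L * ‖y - x‖ := by exact (mul_lt_mul_iff_right₀ hL).mpr this
    simp [hg, hf, max_eq_right this.le]
  have hg_int : Integrable g := hg_cont.integrable_of_hasCompactSupport hg_supp
  have hp_int : Integrable p := by
    by_contra h
    rw [integral_undef h] at hint
    norm_num at hint
  have hle : ∀ y, g y ≤ p y := by
    intro y
    refine max_le ?_ (hnonneg y)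
    have := (abs_le.mp (hlip x y)).2
    have hn : ‖x - y‖ = ‖y - x‖ := norm_sub_rev x y
    linarith [this, hn ▸ this]
  have h1 : ∫ y, g y ≤ 1 := hint ▸ integral_mono hg_int hp_int hle
  -- compute the integral of g
  have htrans : ∫ y, g y = ∫ y : EuclideanSpace ℝ (Fin d), f ‖y‖ := integral_sub_right_eq_self (μ := volume) (fun y : EuclideanSpace ℝ (Fin d) => f ‖y‖) x
  have hdim : Module.finrank ℝ (EuclideanSpace ℝ (Fin d)) = d := finrank_euclideanSpace_fin
  have hformula : ∫ y : EuclideanSpace ℝ (Fin d), f ‖y‖ = (d : ℝ) * (vd * ∫ s in Ioi (0:ℝ), s ^ (d - 1) * f s) := by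
    rw [integral_fun_norm_addHaar volume f, hdim]
    rw [Measure.addHaar_closedBall_eq_addHaar_ball] at hvd
    rw [nsmul_eq_mul, smul_eq_mul, hvd]
    simp [smul_eq_mul]
    left; left; rfl
  have hIoi : ∫ s in Ioi (0:ℝ), s ^ (d - 1) * f s = ∫ s in Ioc (0:ℝ) r, s ^ (d - 1) * (M - L * s) := by
    rw [setIntegral_eq_of_subset_of_forall_diff_eq_zero measurableSet_Ioi Ioc_subset_Ioi_self]
    · apply setIntegral_congr_fun measurableSet_Ioc
      intro s hs
      have : 0 ≤ M - L * s := by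
        have := hs.2
        have : L * s ≤ L * r := (mul_le_mul_iff_right₀ hL).mpr this
        rw [hrdef, mul_div_cancel₀ _ hL.ne'] at this
        linarith
      simp [hf, max_eq_left this]
    · intro s hs
      simp only [mem_diff, mem_Ioi, mem_Ioc, not_and, not_le] at hs
      have hrs : r < s := hs.2 hs.1
      have : M - L * s < 0 := by
        rw [sub_neg]
        calc M = L * r := by rw [hrdef, mul_div_cancel₀ _ hL.ne']
        _ < L * s := (mul_lt_mul_iff_right₀ hL).mpr hrs
      simp [hf, max_eq_right this.le]
  have hcomp : ∫ s in Ioc (0:ℝ) r, s ^ (d - 1) * (M - L * s)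
      = M * r ^ d / d - L * r ^ (d + 1) / (d + 1) := by
    rw [← intervalIntegral.integral_of_le hr.le]
    have hd1 : d - 1 + 1 = d := Nat.succ_pred_eq_of_pos hd
    have hpow : ∀ s : ℝ, s ^ (d - 1) * s = s ^ d := by
      intro s
      rw [← pow_succ, hd1]
    have : ∀ s : ℝ, s ^ (d - 1) * (M - L * s) = M * s ^ (d-1) - L * s ^ d := by
      intro s
      rw [← hpow s]; ring
    simp_rw [this]
    rw [intervalIntegral.integral_sub, intervalIntegral.integral_const_mul,
      intervalIntegral.integral_const_mul, integral_pow, integral_pow, hd1]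
    · rw [Nat.cast_pred hd]
      simp only [zero_pow hd.ne', zero_pow (Nat.succ_ne_zero d)]
      push_cast
      ring
    · exact (intervalIntegral.intervalIntegrable_pow _).const_mul _
    · exact (intervalIntegral.intervalIntegrable_pow _).const_mul _
  have hkey : vd * M ^ (d + 1) / (((d:ℝ) + 1) * L ^ d) ≤ 1 := by
    have := h1
    rw [htrans, hformula, hIoi, hcomp] at this
    have heq : (d:ℝ) * (vd * (M * r ^ d / d - L * r ^ (d + 1) / (d + 1)))
        = vd * M ^ (d + 1) / (((d:ℝ) + 1) * L ^ d) := by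
      rw [hrdef, div_pow, div_pow]
      have hd0 : (d:ℝ) ≠ 0 := Nat.cast_ne_zero.mpr hd.ne'
      have hd10 : (d:ℝ) + 1 ≠ 0 := by positivity
      have hL0 : L ≠ 0 := hL.ne'
      field_simp
      ring
    linarith [heq ▸ this]
  have h2 : M ^ (d + 1) ≤ (((d:ℝ) + 1) * L ^ d) / vd := by
    rw [div_le_one (by positivity)] at hkey
    rw [le_div_iff₀ hvd0]
    linarith [hkey]
  have hMeq : M = (M ^ (d + 1)) ^ ((1:ℝ)/((d:ℝ)+1)) := by
    rw [← Real.rpow_natCast M (d+1), ← Real.rpow_mul hpx.le]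
    push_cast
    rw [mul_one_div, div_self (by positivity), Real.rpow_one]
  calc M = (M ^ (d + 1)) ^ ((1:ℝ)/((d:ℝ)+1)) := hMeq
    _ ≤ ((((d:ℝ) + 1) * L ^ d) / vd) ^ ((1:ℝ)/((d:ℝ)+1)) :=
        Real.rpow_le_rpow (by positivity) h2 (by positivity)
    _ = (((d : ℝ) + 1) / vd * L ^ d) ^ ((1:ℝ)/((d:ℝ)+1)) := by ring_nf
    _ = (((d : ℝ) + 1) / vd) ^ ((1:ℝ)/((d:ℝ)+1)) * (L ^ d) ^ ((1:ℝ)/((d:ℝ)+1)) :=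
        Real.mul_rpow (by positivity) (by positivity)
    _ = (((d : ℝ) + 1) / vd) ^ ((1:ℝ)/((d:ℝ)+1)) * L ^ ((d:ℝ)/((d:ℝ)+1)) := by
        rw [← Real.rpow_natCast L d, ← Real.rpow_mul hL.le, mul_one_div]

/-- An `L`-Lipschitz probability density on `ℝ^d` is uniformly bounded by
`((d+1)/v_d)^(1/(d+1)) · L^(d/(d+1))`, where `v_d` is the volume of the unit ball. -/
theorem lipschitz_density_sup_bound
    (d : ℕ) (p : EuclideanSpace ℝ (Fin d) → ℝ) (L : ℝ) (hL : 0 ≤ L)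
    (hnonneg : ∀ x, 0 ≤ p x)
    (hint : ∫ x, p x = 1)
    (hlip : ∀ x y, |p x - p y| ≤ L * ‖x - y‖)
    (vd : ℝ) (hvd : vd = (volume (Metric.closedBall (0 : EuclideanSpace ℝ (Fin d)) 1)).toReal) :
    ∀ x, p x ≤ (((d : ℝ) + 1) / vd) ^ ((1 : ℝ) / ((d : ℝ) + 1)) * L ^ ((d : ℝ) / ((d : ℝ) + 1)) := by
  intro x
  have hvd0 : 0 < vd := by
    rw [hvd]
    exact ENNReal.toReal_pos (measure_closedBall_pos volume _ one_pos).ne'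
      (measure_closedBall_lt_top).ne
  rcases Nat.eq_zero_or_pos d with hd0 | hd
  · -- d = 0 : the space is a single point
    subst hd0
    haveI : Subsingleton (EuclideanSpace ℝ (Fin 0)) := by
      unfold EuclideanSpace; infer_instance
    have hball : Metric.closedBall (0 : EuclideanSpace ℝ (Fin 0)) 1 = univ := by
      ext y
      simp [Subsingleton.elim y 0]
    have huniv : (volume : Measure (EuclideanSpace ℝ (Fin 0))) univ = 1 := by
      have h := (EuclideanSpace.volume_preserving_symm_measurableEquiv_toLp (Fin 0)).measure_preimage
        (s := Set.univ) (by simp)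
      rw [show ((MeasurableEquiv.toLp 2 (Fin 0 → ℝ)).symm ⁻¹' Set.univ) = Set.univ from rfl] at h
      rw [h, volume_pi, Measure.pi_univ]
      simp
    have hvd1 : vd = 1 := by rw [hvd, hball, huniv]; simp
    have hpconst : p = fun _ => p x := by
      funext y; rw [Subsingleton.elim y x]
    have hpx1 : p x = 1 := by
      rw [hpconst] at hint
      rw [integral_const, measureReal_def, huniv] at hint
      simpa using hint
    rw [hpx1, hvd1]
    norm_num
  · rcases le_or_gt (p x) 0 with hM | hM
    · refine le_trans hM ?_
      positivity
    · rcases eq_or_lt_of_le hL with hL0 | hLpos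
      · -- L = 0 : contradiction
        exfalso
        set C := (((d : ℝ) + 1) / vd) ^ ((1 : ℝ) / ((d : ℝ) + 1)) with hC
        have hCpos : 0 < C := by positivity
        set a := (d : ℝ) / ((d : ℝ) + 1) with ha
        have hapos : 0 < a := by positivity
        set ε := (p x / (2 * C)) ^ (1 / a) with hε
        have hεpos : 0 < ε := Real.rpow_pos_of_pos (by positivity) _
        have hεa : ε ^ a = p x / (2 * C) := by
          rw [hε, ← Real.rpow_mul (by positivity), one_div_mul_cancel hapos.ne',
            Real.rpow_one]
        have hb := lipschitz_density_aux d hd p ε hεpos hnonneg hint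
          (fun y z => le_trans (hlip y z) (by
            rw [← hL0]
            have : (0:ℝ) * ‖y - z‖ = 0 := by ring
            rw [this]
            positivity)) vd hvd x hM
        rw [hεa] at hb
        have : p x ≤ p x / 2 := by
          calc p x ≤ C * (p x / (2 * C)) := hb
          _ = p x / 2 := by field_simp
        linarith
      · exact lipschitz_density_aux d hd p L hLpos hnonneg hint hlip vd hvd x hM
end

section
/- Let p₀ be the Cauchy density with scale parameter α > 0 and let 0 < σ ≤ 1/2. Set b = 2α/(πσ). Then (∫_{−b}^{b} √(p₀(x)) dx)² ≤ (4α/π) · (ln(2e/(πσ)))². -/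
open Real MeasureTheory

/-- Upper bound on the truncated T-functional of the Cauchy density. -/
theorem cauchy_truncated_T_bound (α σ : ℝ) (hα : 0 < α) (hσ : 0 < σ) (hσ2 : σ ≤ 1 / 2)
    (p₀ : ℝ → ℝ)
    (hp₀ : ∀ x, p₀ x = (1 / (π * α)) * (α ^ 2 / (x ^ 2 + α ^ 2)))
    (b : ℝ) (hb : b = 2 * α / (π * σ)) :
    (∫ x in (-b)..b, Real.sqrt (p₀ x)) ^ 2
      ≤ (4 * α / π) * (Real.log (2 * Real.exp 1 / (π * σ))) ^ 2 := by
  have hπ : (0:ℝ) < π := Real.pi_pos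
  have hb0 : 0 < b := by rw [hb]; positivity
  set c := Real.sqrt (α / π) with hc
  -- pointwise formula
  have hpt : ∀ x : ℝ, Real.sqrt (p₀ x) = c * (Real.sqrt (x ^ 2 + α ^ 2))⁻¹ := by
    intro x
    have hx : (0:ℝ) < x ^ 2 + α ^ 2 := by positivity
    rw [hp₀, show (1 / (π * α)) * (α ^ 2 / (x ^ 2 + α ^ 2))
        = (α / π) * (x ^ 2 + α ^ 2)⁻¹ by field_simp,
      Real.sqrt_mul (by positivity), Real.sqrt_inv]
  -- antiderivative
  have key : ∀ x : ℝ, HasDerivAt (fun y => Real.arsinh (y / α))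
      ((Real.sqrt (x ^ 2 + α ^ 2))⁻¹) x := by
    intro x
    have h1 : HasDerivAt (fun y : ℝ => y / α) (1 / α) x := by
      simpa using (hasDerivAt_id x).div_const α
    have h2 := (Real.hasDerivAt_arsinh (x / α)).comp x h1
    have hsq : Real.sqrt (1 + (x / α) ^ 2) = Real.sqrt (x ^ 2 + α ^ 2) / α := by
      rw [show 1 + (x / α) ^ 2 = (x ^ 2 + α ^ 2) / α ^ 2 by field_simp; ring,
        Real.sqrt_div (by positivity), Real.sqrt_sq hα.le]
    have hs0 : (0:ℝ) < Real.sqrt (x ^ 2 + α ^ 2) := Real.sqrt_pos.2 (by positivity)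
    have e : (Real.sqrt (x ^ 2 + α ^ 2))⁻¹ = (Real.sqrt (1 + (x / α) ^ 2))⁻¹ * (1 / α) := by
      rw [hsq, inv_div]; field_simp
    rw [e]; exact h2
  have hcont : Continuous fun x : ℝ => (Real.sqrt (x ^ 2 + α ^ 2))⁻¹ := by
    apply Continuous.inv₀
    · exact Real.continuous_sqrt.comp (by continuity)
    · intro x
      exact (Real.sqrt_pos.2 (by positivity)).ne'
  have hint : ∫ x in (-b)..b, Real.sqrt (p₀ x)
      = c * (2 * Real.arsinh (b / α)) := by
    calc ∫ x in (-b)..b, Real.sqrt (p₀ x)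
        = ∫ x in (-b)..b, c * (Real.sqrt (x ^ 2 + α ^ 2))⁻¹ := by
          apply intervalIntegral.integral_congr; intro x _; exact hpt x
      _ = c * ∫ x in (-b)..b, (Real.sqrt (x ^ 2 + α ^ 2))⁻¹ :=
          intervalIntegral.integral_const_mul _ _
      _ = c * (Real.arsinh (b / α) - Real.arsinh (-b / α)) := by
          rw [intervalIntegral.integral_eq_sub_of_hasDerivAt
            (fun x _ => key x) (hcont.intervalIntegrable _ _)]
      _ = c * (2 * Real.arsinh (b / α)) := by
          rw [show -b / α = -(b / α) by ring, Real.arsinh_neg]; ring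
  set t := b / α with ht
  have ht0 : 0 < t := by positivity
  have htval : t = 2 / (π * σ) := by
    rw [ht, hb]; field_simp
  have htlow : 4 / π ≤ t := by
    rw [htval, div_le_div_iff₀ (by positivity) (by positivity)]
    nlinarith
  -- arsinh bound
  set L := Real.log (2 * Real.exp 1 / (π * σ)) with hL
  have hA : Real.arsinh t ≤ L := by
    rw [Real.arsinh, hL, show 2 * Real.exp 1 / (π * σ) = Real.exp 1 * t by
      rw [htval]; field_simp]
    apply Real.log_le_log (by positivity)
    have he : (2.7:ℝ) < Real.exp 1 := by
      have := Real.exp_one_gt_d9; linarith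
    have hπ2 : π < 3.15 := by
      have := Real.pi_lt_d2; linarith
    have hπ3 : 3 < π := Real.pi_gt_three
    have hsqle : Real.sqrt (1 + t ^ 2) ≤ (Real.exp 1 - 1) * t := by
      rw [show (Real.exp 1 - 1) * t = Real.sqrt (((Real.exp 1 - 1) * t) ^ 2) from
        (Real.sqrt_sq (by nlinarith)).symm]
      apply Real.sqrt_le_sqrt
      have ht2 : (4 / π) ^ 2 ≤ t ^ 2 := by
        apply pow_le_pow_left₀ (by positivity) htlow
      have h4 : (1:ℝ) ≤ ((Real.exp 1 - 1) ^ 2 - 1) * (4 / π) ^ 2 := by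
        rw [show ((Real.exp 1 - 1) ^ 2 - 1) * (4 / π) ^ 2
          = ((Real.exp 1 - 1) ^ 2 - 1) * 16 / π ^ 2 by rw [div_pow]; ring,
          le_div_iff₀ (by positivity)]
        nlinarith
      nlinarith [mul_le_mul_of_nonneg_left ht2 (show (0:ℝ) ≤ (Real.exp 1 - 1)^2 - 1 by nlinarith)]
    linarith
  have hA0 : 0 ≤ Real.arsinh t := Real.arsinh_nonneg_iff.2 ht0.le
  have hL0 : 0 ≤ L := le_trans hA0 hA
  rw [hint]
  have hc2 : c ^ 2 = α / π := Real.sq_sqrt (by positivity)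
  rw [mul_pow, hc2]
  have hAA : Real.arsinh t ^ 2 ≤ L ^ 2 := by nlinarith
  calc α / π * (2 * Real.arsinh t) ^ 2 = 4 * α / π * Real.arsinh t ^ 2 := by ring
    _ ≤ 4 * α / π * L ^ 2 := by
        apply mul_le_mul_of_nonneg_left hAA (by positivity)
end
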